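/- arXiv:2010.10090 — 2 statements merged into one kernel-verified Lean document; each statement's English description precedes it below -/
import Mathlib

section
/- (Transfer risk bound) Let P be a probability distribution on an input space 𝒳, φ : 𝒳 → ℝᵖ a feature map, and u, v ∈ ℝᵖ nonzero vectors (u = Δw* − Δw_z the oracle direction, v = Δŵ − Δw_z the student direction). Let ᾱ(a,b) ∈ [0, π/2] denote the acute angle arccos(|⟨a,b⟩|/(‖a‖‖b‖)), let ᾱₙ = ᾱ(u, v), and assume the (non-acute) angle α(u,v) ≤ π/2. Define p(β) = P[ᾱ(φ(x), u) > β]. Then the transfer risk ℛ = P[(uᵀφ(x))·(vᵀφ(x)) < 0] satisfies ℛ ≤ p(π/2 − ᾱₙ). -/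
open scoped RealInnerProductSpace
open MeasureTheory

/-- The acute angle `ᾱ(a,b) = arccos(|⟪a,b⟫|/(‖a‖‖b‖)) ∈ [0, π/2]`. -/
noncomputable def acuteAngle {E : Type*} [NormedAddCommGroup E]
    [InnerProductSpace ℝ E] (a b : E) : ℝ :=
  Real.arccos (|⟪a, b⟫| / (‖a‖ * ‖b‖))

private lemma alg_aux (a b c nu nv nw : ℝ) (hnu : 0 < nu) (hc : 0 ≤ c)
    (hmain : nu * nv * nw ≤ a ^ 2 * nv + c ^ 2 * nw)
    (hCS : (b - c * a / nu) * (b - c * a / nu) ≤ (nv - c ^ 2 / nu) * (nw - a ^ 2 / nu)) :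
    0 ≤ a * b := by
  have h1 : (nu * b - c * a) ^ 2 ≤ (nu * nv - c ^ 2) * (nu * nw - a ^ 2) := by
    have := mul_le_mul_of_nonneg_right hCS (le_of_lt (mul_pos hnu hnu))
    have e1 : (b - c * a / nu) * (b - c * a / nu) * (nu * nu) = (nu * b - c * a) ^ 2 := by
      field_simp
    have e2 : (nv - c ^ 2 / nu) * (nw - a ^ 2 / nu) * (nu * nu)
        = (nu * nv - c ^ 2) * (nu * nw - a ^ 2) := by
      field_simp
    linarith [e1 ▸ e2 ▸ this]
  have h2 : (nu * nv - c ^ 2) * (nu * nw - a ^ 2) ≤ (c * a) ^ 2 := by nlinarith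
  have h3 : (nu * b - c * a) ^ 2 ≤ (c * a) ^ 2 := le_trans h1 h2
  have h4 : (a * (nu * b - c * a)) ^ 2 ≤ (c * a ^ 2) ^ 2 := by nlinarith [sq_nonneg a]
  have h5 : - (c * a ^ 2) ≤ a * (nu * b - c * a) := by
    nlinarith [sq_nonneg (c * a ^ 2 + a * (nu * b - c * a)), mul_nonneg hc (sq_nonneg a)]
  have h6 : 0 ≤ nu * (a * b) := by nlinarith
  nlinarith [h6, hnu]

private lemma key_classify {E : Type*} [NormedAddCommGroup E] [InnerProductSpace ℝ E]
    (u v w : E) (hu : u ≠ 0) (hv : v ≠ 0) (hw : w ≠ 0)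
    (hc : 0 ≤ ⟪u, v⟫)
    (h : acuteAngle w u ≤ Real.pi / 2 - acuteAngle u v) :
    0 ≤ ⟪u, w⟫ * ⟪v, w⟫ := by
  have hnu : (0:ℝ) < ‖u‖ := norm_pos_iff.2 hu
  have hnv : (0:ℝ) < ‖v‖ := norm_pos_iff.2 hv
  have hnw : (0:ℝ) < ‖w‖ := norm_pos_iff.2 hw
  have hwu : (⟪w, u⟫ : ℝ) = ⟪u, w⟫ := real_inner_comm u w
  set a : ℝ := ⟪u, w⟫ with ha
  set c : ℝ := ⟪u, v⟫ with hcdef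
  set b : ℝ := ⟪v, w⟫ with hb
  set A : ℝ := |⟪w, u⟫| / (‖w‖ * ‖u‖) with hA
  set B : ℝ := |⟪u, v⟫| / (‖u‖ * ‖v‖) with hB
  have hA0 : 0 ≤ A := div_nonneg (abs_nonneg _) (by positivity)
  have hA1 : A ≤ 1 := by
    have := abs_real_inner_div_norm_mul_norm_le_one w u
    rwa [abs_div, abs_of_pos (by positivity : (0:ℝ) < ‖w‖ * ‖u‖)] at this
  have hB0 : 0 ≤ B := div_nonneg (abs_nonneg _) (by positivity)
  have hB1 : B ≤ 1 := by
    have := abs_real_inner_div_norm_mul_norm_le_one u v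
    rwa [abs_div, abs_of_pos (by positivity : (0:ℝ) < ‖u‖ * ‖v‖)] at this
  -- translate the angle hypothesis into `√(1 - B²) ≤ A`
  have h' : Real.arccos A ≤ Real.arcsin B := by
    have e : Real.pi / 2 - Real.arccos B = Real.arcsin B := by
      rw [Real.arccos_eq_pi_div_two_sub_arcsin]; ring
    have : acuteAngle w u = Real.arccos A := rfl
    have hBv : acuteAngle u v = Real.arccos B := rfl
    rw [this, hBv, e] at h
    exact h
  have hkey : Real.sqrt (1 - B ^ 2) ≤ A := by
    have h1 : Real.cos (Real.arcsin B) ≤ Real.cos (Real.arccos A) :=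
      Real.cos_le_cos_of_nonneg_of_le_pi (Real.arccos_nonneg _)
        (le_trans (Real.arcsin_le_pi_div_two _) (by linarith [Real.pi_pos])) h'
    rwa [Real.cos_arcsin, Real.cos_arccos (by linarith) hA1] at h1
  have hsq : 1 - B ^ 2 ≤ A ^ 2 := by
    nlinarith [Real.sq_sqrt (show (0:ℝ) ≤ 1 - B ^ 2 by nlinarith), hkey,
      Real.sqrt_nonneg (1 - B ^ 2)]
  -- clear denominators: `‖u‖²‖v‖²‖w‖² ≤ a²‖v‖² + c²‖w‖²`
  have hA2 : A ^ 2 = a ^ 2 / (‖w‖ ^ 2 * ‖u‖ ^ 2) := by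
    rw [hA, hwu, div_pow, sq_abs, mul_pow]
  have hB2 : B ^ 2 = c ^ 2 / (‖u‖ ^ 2 * ‖v‖ ^ 2) := by
    rw [hB, ← hcdef, div_pow, sq_abs, mul_pow]
  rw [hA2, hB2] at hsq
  have hmain : ‖u‖ ^ 2 * ‖v‖ ^ 2 * ‖w‖ ^ 2 ≤ a ^ 2 * ‖v‖ ^ 2 + c ^ 2 * ‖w‖ ^ 2 := by
    have e1 : (1 - c ^ 2 / (‖u‖ ^ 2 * ‖v‖ ^ 2)) * (‖u‖ ^ 2 * ‖v‖ ^ 2 * ‖w‖ ^ 2)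
        = ‖u‖ ^ 2 * ‖v‖ ^ 2 * ‖w‖ ^ 2 - c ^ 2 * ‖w‖ ^ 2 := by
      field_simp
    have e2 : a ^ 2 / (‖w‖ ^ 2 * ‖u‖ ^ 2) * (‖u‖ ^ 2 * ‖v‖ ^ 2 * ‖w‖ ^ 2)
        = a ^ 2 * ‖v‖ ^ 2 := by
      field_simp
    have h4 : (1 - c ^ 2 / (‖u‖ ^ 2 * ‖v‖ ^ 2)) * (‖u‖ ^ 2 * ‖v‖ ^ 2 * ‖w‖ ^ 2)
        ≤ a ^ 2 / (‖w‖ ^ 2 * ‖u‖ ^ 2) * (‖u‖ ^ 2 * ‖v‖ ^ 2 * ‖w‖ ^ 2) := by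
      apply mul_le_mul_of_nonneg_right _ (by positivity)
      linarith
    rw [e1, e2] at h4
    linarith
  -- orthogonal decomposition and Cauchy–Schwarz
  have hnu2 : (0:ℝ) < ‖u‖ ^ 2 := by positivity
  have huu : (⟪u, u⟫ : ℝ) = ‖u‖ ^ 2 := real_inner_self_eq_norm_sq u
  have hvv : (⟪v, v⟫ : ℝ) = ‖v‖ ^ 2 := real_inner_self_eq_norm_sq v
  have hww : (⟪w, w⟫ : ℝ) = ‖w‖ ^ 2 := real_inner_self_eq_norm_sq w
  have hvu : (⟪v, u⟫ : ℝ) = c := by rw [real_inner_comm]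
  have hCS := real_inner_mul_inner_self_le
    (v - (c / ‖u‖ ^ 2) • u) (w - (a / ‖u‖ ^ 2) • u)
  have hvw' : (⟪v - (c / ‖u‖ ^ 2) • u, w - (a / ‖u‖ ^ 2) • u⟫ : ℝ)
      = b - c * a / ‖u‖ ^ 2 := by
    simp only [inner_sub_left, inner_sub_right, real_inner_smul_left, real_inner_smul_right]
    rw [huu, hvu, ← hb, ← ha]
    field_simp
    try ring
  have hvv' : (⟪v - (c / ‖u‖ ^ 2) • u, v - (c / ‖u‖ ^ 2) • u⟫ : ℝ)
      = ‖v‖ ^ 2 - c ^ 2 / ‖u‖ ^ 2 := by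
    simp only [inner_sub_left, inner_sub_right, real_inner_smul_left, real_inner_smul_right]
    rw [huu, hvv, hvu]
    field_simp
    try ring
  have hww' : (⟪w - (a / ‖u‖ ^ 2) • u, w - (a / ‖u‖ ^ 2) • u⟫ : ℝ)
      = ‖w‖ ^ 2 - a ^ 2 / ‖u‖ ^ 2 := by
    simp only [inner_sub_left, inner_sub_right, real_inner_smul_left, real_inner_smul_right]
    rw [huu, hww, hwu, ← ha]
    field_simp
    try ring
  rw [hvw', hvv', hww'] at hCS
  exact alg_aux a b c (‖u‖ ^ 2) (‖v‖ ^ 2) (‖w‖ ^ 2) hnu2 hc hmain hCS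

/-- Transfer risk bound: if `α(u,v) ≤ π/2`, the transfer risk
`ℛ = P[(uᵀφ(x))(vᵀφ(x)) < 0]` is bounded by `p(π/2 − ᾱₙ)` where
`p(β) = P[ᾱ(φ(x), u) > β]` and `ᾱₙ = ᾱ(u,v)`. -/
theorem transfer_risk_bound
    {𝒳 : Type*} [MeasurableSpace 𝒳] (μ : Measure 𝒳) [IsProbabilityMeasure μ]
    (p : ℕ) (φ : 𝒳 → EuclideanSpace ℝ (Fin p))
    (u v : EuclideanSpace ℝ (Fin p)) (hu : u ≠ 0) (hv : v ≠ 0)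
    (hangle : InnerProductGeometry.angle u v ≤ Real.pi / 2) :
    μ {x | ⟪u, φ x⟫ * ⟪v, φ x⟫ < 0}
      ≤ μ {x | Real.pi / 2 - acuteAngle u v < acuteAngle (φ x) u} := by
  apply measure_mono
  intro x hx
  simp only [Set.mem_setOf_eq] at hx ⊢
  by_contra hcon
  push_neg at hcon
  have hw : φ x ≠ 0 := by
    intro h0
    rw [h0] at hx
    simp at hx
  have hc : 0 ≤ (⟪u, v⟫ : ℝ) := by
    rw [InnerProductGeometry.angle, Real.arccos_le_pi_div_two] at hangle
    have hpos : (0:ℝ) < ‖u‖ * ‖v‖ := by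
      have : (0:ℝ) < ‖u‖ := norm_pos_iff.2 hu
      have : (0:ℝ) < ‖v‖ := norm_pos_iff.2 hv
      positivity
    have := mul_nonneg hangle (le_of_lt hpos)
    rwa [div_mul_cancel₀ _ (ne_of_gt hpos)] at this
  have := key_classify u v (φ x) hu hv hw hc hcon
  linarith
end

section
/- (Kernel form of the angle derivative) Let Φ ∈ ℝ^{p×n} have full column rank, Θ = ΦᵀΦ, and write ⟨a, b⟩_Θ = aᵀ Θ⁻¹ b for a, b ∈ ℝⁿ. Given vectors z_g, z_t, δz_h ∈ ℝⁿ with z_t ≠ 0, set g = ΦΘ⁻¹z_g, t = ΦΘ⁻¹z_t, h = ΦΘ⁻¹δz_h. Then ⟨g, t⟩ = ⟨z_g, z_t⟩_Θ, ‖t‖² = ⟨z_t, z_t⟩_Θ, and the derivative at ε = 0 of cos α(t + εh, g·(‖w_g‖/‖g‖)) with respect to ε, when g is replaced by the full oracle weight w_g with Φᵀw_g = z_g, equals (1/(‖w_g‖₂ √(⟨z_t,z_t⟩_Θ))) · ( ⟨z_g, δz_h⟩_Θ − (⟨z_g, z_t⟩_Θ/⟨z_t, z_t⟩_Θ)·⟨z_t,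 δz_h⟩_Θ ). -/
open Matrix

set_option maxHeartbeats 1000000

/-- Kernel form of the angle derivative: with `Θ = ΦᵀΦ`
positive definite, `⟨a,b⟩_Θ = aᵀΘ⁻¹b`, `g = ΦΘ⁻¹z_g`, `t = ΦΘ⁻¹z_t`,
`h = ΦΘ⁻¹δz_h`, and `w_g` with `Φᵀw_g = z_g`: one has `⟪g,t⟫ = ⟨z_g,z_t⟩_Θ`,
`‖t‖² = ⟨z_t,z_t⟩_Θ`, and the derivative at `ε = 0` of
`ε ↦ cos α(t + εh, w_g)` equals
`(⟨z_g,δz_h⟩_Θ − (⟨z_g,z_t⟩_Θ/⟨z_t,z_t⟩_Θ)⟨z_t,δz_h⟩_Θ)/(‖w_g‖₂ √⟨z_t,z_t⟩_Θ)`. -/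
theorem kernel_form_angle_derivative
    (p n : ℕ) (Φ : Matrix (Fin p) (Fin n) ℝ)
    (Θ : Matrix (Fin n) (Fin n) ℝ) (hΘ : Θ = Φᵀ * Φ)
    (hΘpd : Θ.PosDef) [Invertible Θ]
    (zg zt δzh : Fin n → ℝ) (hzt : zt ≠ 0)
    (g t h : Fin p → ℝ)
    (hg : g = Φ.mulVec (Θ⁻¹.mulVec zg))
    (ht : t = Φ.mulVec (Θ⁻¹.mulVec zt))
    (hh : h = Φ.mulVec (Θ⁻¹.mulVec δzh))
    (wg : Fin p → ℝ) (hwg : Φᵀ.mulVec wg = zg) (hwg0 : wg ≠ 0) :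
    g ⬝ᵥ t = zg ⬝ᵥ Θ⁻¹.mulVec zt ∧
    t ⬝ᵥ t = zt ⬝ᵥ Θ⁻¹.mulVec zt ∧
    HasDerivAt
      (fun ε : ℝ => (wg ⬝ᵥ (t + ε • h)) /
        (Real.sqrt (wg ⬝ᵥ wg) * Real.sqrt ((t + ε • h) ⬝ᵥ (t + ε • h))))
      ((zg ⬝ᵥ Θ⁻¹.mulVec δzh
          - (zg ⬝ᵥ Θ⁻¹.mulVec zt) / (zt ⬝ᵥ Θ⁻¹.mulVec zt)
            * (zt ⬝ᵥ Θ⁻¹.mulVec δzh))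
        / (Real.sqrt (wg ⬝ᵥ wg) * Real.sqrt (zt ⬝ᵥ Θ⁻¹.mulVec zt))) 0 := by
  -- basic transport lemma
  have key : ∀ (u : Fin n → ℝ) (w : Fin p → ℝ),
      Φ.mulVec u ⬝ᵥ w = u ⬝ᵥ Φᵀ.mulVec w := by
    intro u w
    rw [dotProduct_comm, Matrix.dotProduct_mulVec, ← Matrix.mulVec_transpose, dotProduct_comm]
  have hsymm : Θ⁻¹ᵀ = Θ⁻¹ := (hΘpd.1.inv)
  have hsymdot : ∀ (x y : Fin n → ℝ), x ⬝ᵥ Θ⁻¹.mulVec y = y ⬝ᵥ Θ⁻¹.mulVec x := by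
    intro x y
    rw [Matrix.dotProduct_mulVec, ← Matrix.mulVec_transpose, hsymm, dotProduct_comm]
  have hcancel : ∀ u : Fin n → ℝ, Θ.mulVec (Θ⁻¹.mulVec u) = u := by
    intro u
    rw [Matrix.mulVec_mulVec, Matrix.mul_inv_of_invertible, Matrix.one_mulVec]
  -- the five dot-product identities
  have pair : ∀ (x y : Fin n → ℝ),
      (Φ.mulVec (Θ⁻¹.mulVec x)) ⬝ᵥ (Φ.mulVec (Θ⁻¹.mulVec y)) = x ⬝ᵥ Θ⁻¹.mulVec y := by
    intro x y
    rw [key]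
    have hy : Φᵀ *ᵥ (Φ *ᵥ (Θ⁻¹ *ᵥ y)) = y := by
      rw [Matrix.mulVec_mulVec, ← hΘ]; exact hcancel y
    rw [hy, dotProduct_comm, hsymdot]
  have hwgpair : ∀ x : Fin n → ℝ,
      wg ⬝ᵥ Φ.mulVec (Θ⁻¹.mulVec x) = zg ⬝ᵥ Θ⁻¹.mulVec x := by
    intro x
    rw [dotProduct_comm, key, hwg, dotProduct_comm, hsymdot]
  have hgt : g ⬝ᵥ t = zg ⬝ᵥ Θ⁻¹.mulVec zt := by rw [hg, ht]; exact pair zg zt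
  have hT : t ⬝ᵥ t = zt ⬝ᵥ Θ⁻¹.mulVec zt := by rw [ht]; exact pair zt zt
  have hS : t ⬝ᵥ h = zt ⬝ᵥ Θ⁻¹.mulVec δzh := by rw [ht, hh]; exact pair zt δzh
  have hH : h ⬝ᵥ h = δzh ⬝ᵥ Θ⁻¹.mulVec δzh := by rw [hh]; exact pair δzh δzh
  have hA : wg ⬝ᵥ t = zg ⬝ᵥ Θ⁻¹.mulVec zt := by rw [ht]; exact hwgpair zt
  have hB : wg ⬝ᵥ h = zg ⬝ᵥ Θ⁻¹.mulVec δzh := by rw [hh]; exact hwgpair δzh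
  refine ⟨hgt, hT, ?_⟩
  set A := zg ⬝ᵥ Θ⁻¹.mulVec zt with hAdef
  set B := zg ⬝ᵥ Θ⁻¹.mulVec δzh with hBdef
  set S := zt ⬝ᵥ Θ⁻¹.mulVec δzh with hSdef
  set T := zt ⬝ᵥ Θ⁻¹.mulVec zt with hTdef
  set H := δzh ⬝ᵥ Θ⁻¹.mulVec δzh with hHdef
  have hT0 : 0 < T := by
    have := hΘpd.inv.dotProduct_mulVec_pos hzt
    simpa [hTdef] using this
  have hC0 : 0 < wg ⬝ᵥ wg := by
    have h1 : (0:ℝ) ≤ wg ⬝ᵥ wg := by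
      simp only [dotProduct]
      exact Finset.sum_nonneg fun i _ => mul_self_nonneg _
    have h2 : wg ⬝ᵥ wg ≠ 0 := by
      intro hc
      exact hwg0 (by simpa using (dotProduct_self_eq_zero (v := wg)).mp hc)
    exact lt_of_le_of_ne h1 (Ne.symm h2)
  set C := Real.sqrt (wg ⬝ᵥ wg) with hCdef
  have hCs : 0 < C := Real.sqrt_pos.mpr hC0
  have hTs : 0 < Real.sqrt T := Real.sqrt_pos.mpr hT0
  -- rewrite the function
  have hfun : (fun ε : ℝ => (wg ⬝ᵥ (t + ε • h)) /
        (Real.sqrt (wg ⬝ᵥ wg) * Real.sqrt ((t + ε • h) ⬝ᵥ (t + ε • h))))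
      = fun ε : ℝ => (A + B * ε) / (C * Real.sqrt (T + (2*S) * ε + H * ε^2)) := by
    funext ε
    have h1 : wg ⬝ᵥ (t + ε • h) = A + B * ε := by
      simp [dotProduct_add, dotProduct_smul, smul_eq_mul, hA, hB]; ring
    have h2 : (t + ε • h) ⬝ᵥ (t + ε • h) = T + (2*S) * ε + H * ε^2 := by
      have hht : h ⬝ᵥ t = S := by rw [dotProduct_comm]; exact hS
      simp [dotProduct_add, add_dotProduct, dotProduct_smul, smul_dotProduct,
        smul_eq_mul, hT, hS, hht, hH]
      ring
    rw [h1, h2, hCdef]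
  rw [hfun]
  -- derivatives
  have hq : HasDerivAt (fun ε : ℝ => T + (2*S) * ε + H * ε^2) (2*S) 0 := by
    have : HasDerivAt (fun ε : ℝ => T + (2*S) * ε + H * ε^2)
        (0 + (2*S) * 1 + H * (2 * 0^1)) 0 := by
      exact ((hasDerivAt_const 0 T).add ((hasDerivAt_id 0).const_mul (2*S))).add
        ((hasDerivAt_pow 2 (0:ℝ)).const_mul H)
    simpa using this
  have hq0 : (fun ε : ℝ => T + (2*S) * ε + H * ε^2) 0 = T := by simp
  have hsq : HasDerivAt (fun ε : ℝ => Real.sqrt (T + (2*S) * ε + H * ε^2))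
      (1 / (2 * Real.sqrt T) * (2*S)) 0 := by
    have hsqrtT : HasDerivAt Real.sqrt (1 / (2 * Real.sqrt T))
        ((fun ε : ℝ => T + (2*S) * ε + H * ε^2) 0) := by
      simpa using Real.hasDerivAt_sqrt (ne_of_gt hT0)
    exact hsqrtT.comp 0 hq
  have hd : HasDerivAt (fun ε : ℝ => C * Real.sqrt (T + (2*S) * ε + H * ε^2))
      (C * (1 / (2 * Real.sqrt T) * (2*S))) 0 := hsq.const_mul C
  have hu : HasDerivAt (fun ε : ℝ => A + B * ε) B 0 := by
    simpa using ((hasDerivAt_id (0:ℝ)).const_mul B).const_add A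
  have hd0 : C * Real.sqrt (T + (2*S) * 0 + H * 0^2) ≠ 0 := by
    simp only [mul_zero, add_zero, ne_eq, mul_eq_zero, not_or, zero_pow]
    constructor
    · exact ne_of_gt hCs
    · simpa using ne_of_gt hTs
  have := hu.div (by simpa using hd) (by simpa using hd0)
  refine HasDerivAt.congr_deriv this ?_
  symm
  have h0 : T + 2*S*0 + H*0^2 = T := by ring
  rw [h0]
  have hrT : Real.sqrt T * Real.sqrt T = T := Real.mul_self_sqrt hT0.le
  have hr0 : Real.sqrt T ≠ 0 := ne_of_gt hTs
  have hC0' : C ≠ 0 := ne_of_gt hCs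
  rw [← hrT]
  field_simp
  rw [Real.sqrt_sq hTs.le]
  ring
end
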